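/- The diagonal Fradkin integrals pairwise Poisson-commute: for all i, j ∈ {1,…,N}, {I_{ii}, I_{jj}} = 0, where I_{kk}(q,p) = pₖ² − (2λ H_λ(q,p) − ω²) qₖ². -/

import Mathlib

open Filter Topology

noncomputable def Hlam {N : ℕ} (lam om : ℝ) (q p : Fin N → ℝ) : ℝ :=
  ((∑ i, p i ^ 2) + om ^ 2 * ∑ i, q i ^ 2) / (2 * (1 + lam * ∑ i, q i ^ 2))

lemma sum_update_sq' {N : ℕ} (q : Fin N → ℝ) (k : Fin N) (t : ℝ) :
    ∑ m, (Function.update q k t m)^2 = (∑ m, q m ^2) + (t^2 - q k ^2) := by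
  have e : ∀ m, (Function.update q k t m)^2 = Function.update (fun m => q m ^2) k (t^2) m := by
    intro m
    by_cases hm : m = k
    · subst hm; simp
    · simp [Function.update_of_ne hm]
  simp_rw [e]
  rw [Finset.sum_update_of_mem (Finset.mem_univ k),
    Finset.sdiff_singleton_eq_erase, Finset.sum_erase_eq_sub (Finset.mem_univ k)]
  ring

lemma hasDerivAt_Hq {N : ℕ} (lam om : ℝ) (q p : Fin N → ℝ) (k : Fin N)
    (h : 1 + lam * ∑ m, q m ^ 2 ≠ 0) :
    HasDerivAt (fun t => Hlam lam om (Function.update q k t) p)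
      (q k * (om ^ 2 - lam * ∑ m, p m ^ 2) / (1 + lam * ∑ m, q m ^ 2) ^ 2) (q k) := by
  have hfun : (fun t => Hlam lam om (Function.update q k t) p)
      = fun t => ((∑ m, p m ^ 2) + om ^ 2 * ((∑ m, q m ^ 2) + (t ^ 2 - q k ^ 2))) /
          (2 * (1 + lam * ((∑ m, q m ^ 2) + (t ^ 2 - q k ^ 2)))) := by
    funext t; simp [Hlam, sum_update_sq']
  rw [hfun]
  set A := ∑ m, p m ^ 2 with hA
  set B := ∑ m, q m ^ 2 with hB
  have h0 : HasDerivAt (fun t : ℝ => t ^ 2) (2 * q k) (q k) := by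
    simpa using hasDerivAt_pow 2 (q k)
  have hnum : HasDerivAt (fun t : ℝ => A + om ^ 2 * (B + (t ^ 2 - q k ^ 2)))
      (om ^ 2 * (2 * q k)) (q k) :=
    (((h0.sub_const _).const_add B).const_mul (om ^ 2)).const_add A
  have hden : HasDerivAt (fun t : ℝ => 2 * (1 + lam * (B + (t ^ 2 - q k ^ 2))))
      (2 * (lam * (2 * q k))) (q k) :=
    ((((h0.sub_const _).const_add B).const_mul lam).const_add 1).const_mul 2
  have hd0 : 2 * (1 + lam * (B + (q k ^ 2 - q k ^ 2))) ≠ 0 := by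
    simpa using mul_ne_zero two_ne_zero h
  have := hnum.div hden hd0
  refine this.congr_deriv ?_
  have hB0 : B + (q k ^ 2 - q k ^ 2) = B := by ring
  rw [hB0] at *
  field_simp
  ring

lemma hasDerivAt_Hp {N : ℕ} (lam om : ℝ) (q p : Fin N → ℝ) (k : Fin N)
    (h : 1 + lam * ∑ m, q m ^ 2 ≠ 0) :
    HasDerivAt (fun t => Hlam lam om q (Function.update p k t))
      (p k / (1 + lam * ∑ m, q m ^ 2)) (p k) := by
  have hfun : (fun t => Hlam lam om q (Function.update p k t))
      = fun t => (((∑ m, p m ^ 2) + (t ^ 2 - p k ^ 2)) + om ^ 2 * (∑ m, q m ^ 2)) /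
          (2 * (1 + lam * ∑ m, q m ^ 2)) := by
    funext t; simp [Hlam, sum_update_sq']
  rw [hfun]
  have h0 : HasDerivAt (fun t : ℝ => t ^ 2) (2 * p k) (p k) := by
    simpa using hasDerivAt_pow 2 (p k)
  have := (((h0.sub_const (p k ^ 2)).const_add (∑ m, p m ^ 2)).add_const
      (om ^ 2 * ∑ m, q m ^ 2)).div_const (2 * (1 + lam * ∑ m, q m ^ 2))
  refine this.congr_deriv ?_
  field_simp

lemma hasDerivAt_Fq {N : ℕ} (lam om : ℝ) (q p : Fin N → ℝ) (i k : Fin N)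
    (h : 1 + lam * ∑ m, q m ^ 2 ≠ 0) :
    HasDerivAt (fun t => p i ^ 2 -
        (2 * lam * Hlam lam om (Function.update q k t) p - om ^ 2) *
          (Function.update q k t i) ^ 2)
      (-(2 * lam * (q k * (om ^ 2 - lam * ∑ m, p m ^ 2) / (1 + lam * ∑ m, q m ^ 2) ^ 2)
          * q i ^ 2)
        - (if k = i then (2 * lam * Hlam lam om q p - om ^ 2) * (2 * q i) else 0)) (q k) := by
  have hH := hasDerivAt_Hq lam om q p k h
  by_cases hk : k = i
  · subst hk
    have hfun : (fun t => p k ^ 2 -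
        (2 * lam * Hlam lam om (Function.update q k t) p - om ^ 2) *
          (Function.update q k t k) ^ 2)
        = fun t => p k ^ 2 -
          (2 * lam * Hlam lam om (Function.update q k t) p - om ^ 2) * t ^ 2 := by
      funext t; rw [Function.update_self]
    rw [hfun]
    have h0 : HasDerivAt (fun t : ℝ => t ^ 2) (2 * q k) (q k) := by
      simpa using hasDerivAt_pow 2 (q k)
    have := (((hH.const_mul (2 * lam)).sub_const (om ^ 2)).mul h0).const_sub (p k ^ 2)
    refine this.congr_deriv ?_
    rw [if_pos rfl, Function.update_eq_self]
    ring
  · have hik : i ≠ k := fun hik => hk hik.symm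
    have hfun : (fun t => p i ^ 2 -
        (2 * lam * Hlam lam om (Function.update q k t) p - om ^ 2) *
          (Function.update q k t i) ^ 2)
        = fun t => p i ^ 2 -
          (2 * lam * Hlam lam om (Function.update q k t) p - om ^ 2) * q i ^ 2 := by
      funext t; rw [Function.update_of_ne hik]
    rw [hfun]
    have := (((hH.const_mul (2 * lam)).sub_const (om ^ 2)).mul_const (q i ^ 2)).const_sub
      (p i ^ 2)
    refine this.congr_deriv ?_
    rw [if_neg hk]
    ring

lemma hasDerivAt_Fp {N : ℕ} (lam om : ℝ) (q p : Fin N → ℝ) (i k : Fin N)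
    (h : 1 + lam * ∑ m, q m ^ 2 ≠ 0) :
    HasDerivAt (fun t => (Function.update p k t i) ^ 2 -
        (2 * lam * Hlam lam om q (Function.update p k t) - om ^ 2) * q i ^ 2)
      ((if k = i then 2 * p i else 0)
        - 2 * lam * (p k / (1 + lam * ∑ m, q m ^ 2)) * q i ^ 2) (p k) := by
  have hH := hasDerivAt_Hp lam om q p k h
  have hHc := ((hH.const_mul (2 * lam)).sub_const (om ^ 2)).mul_const (q i ^ 2)
  by_cases hk : k = i
  · subst hk
    have hfun : (fun t => (Function.update p k t k) ^ 2 -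
        (2 * lam * Hlam lam om q (Function.update p k t) - om ^ 2) * q k ^ 2)
        = fun t => t ^ 2 -
          (2 * lam * Hlam lam om q (Function.update p k t) - om ^ 2) * q k ^ 2 := by
      funext t; rw [Function.update_self]
    rw [hfun]
    have h0 : HasDerivAt (fun t : ℝ => t ^ 2) (2 * p k) (p k) := by
      simpa using hasDerivAt_pow 2 (p k)
    have := h0.sub hHc
    refine this.congr_deriv ?_
    rw [if_pos rfl]
  · have hik : i ≠ k := fun hik => hk hik.symm
    have hfun : (fun t => (Function.update p k t i) ^ 2 -
        (2 * lam * Hlam lam om q (Function.update p k t) - om ^ 2) * q i ^ 2)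
        = fun t => p i ^ 2 -
          (2 * lam * Hlam lam om q (Function.update p k t) - om ^ 2) * q i ^ 2 := by
      funext t; rw [Function.update_of_ne hik]
    rw [hfun]
    have := hHc.const_sub (p i ^ 2)
    refine this.congr_deriv ?_
    rw [if_neg hk]
    ring

noncomputable def pbracket {N : ℕ} (F G : (Fin N → ℝ) → (Fin N → ℝ) → ℝ)
    (q p : Fin N → ℝ) : ℝ :=
  ∑ k, (deriv (fun t => F (Function.update q k t) p) (q k)
          * deriv (fun t => G q (Function.update p k t)) (p k)
        - deriv (fun t => F q (Function.update p k t)) (p k)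
          * deriv (fun t => G (Function.update q k t) p) (q k))

set_option maxHeartbeats 1000000 in
theorem stmt_4 {N : ℕ} (lam om : ℝ) (i j : Fin N) (q p : Fin N → ℝ)
    (h : 1 + lam * ∑ k, q k ^ 2 ≠ 0) :
    pbracket
      (fun q p => p i ^ 2 - (2 * lam * Hlam lam om q p - om ^ 2) * q i ^ 2)
      (fun q p => p j ^ 2 - (2 * lam * Hlam lam om q p - om ^ 2) * q j ^ 2)
      q p = 0 := by
  simp only [pbracket]
  apply Finset.sum_eq_zero
  intro k _
  rw [(hasDerivAt_Fq lam om q p i k h).deriv, (hasDerivAt_Fp lam om q p j k h).deriv,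
    (hasDerivAt_Fp lam om q p i k h).deriv, (hasDerivAt_Fq lam om q p j k h).deriv]
  simp only [Hlam]
  rcases eq_or_ne k i with hki | hki
  · subst hki
    rcases eq_or_ne k j with hkj | hkj
    · subst hkj
      simp only [if_pos rfl, eq_self_iff_true, if_true]
      field_simp
      ring
    · rw [if_neg hkj, if_neg hkj]
      simp only [if_pos rfl, eq_self_iff_true, if_true]
      field_simp
      ring
  · rw [if_neg hki, if_neg hki]
    rcases eq_or_ne k j with hkj | hkj
    · subst hkj
      simp only [if_pos rfl, eq_self_iff_true, if_true]
      field_simp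
      ring
    · rw [if_neg hkj, if_neg hkj]
      field_simp
      ring
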